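/- Let n ≥ 1, let q ≥ 1 be an integer, let w ∈ ℕⁿ be a vector of weights, and let f ∈ ℝ[x₁,…,xₙ] be a polynomial with non-negative coefficients such that: f(x) = 1 whenever x₁ + ⋯ + xₙ = 1; the constant coefficient of f is zero; f has total degree p ≥ 1 and the coefficient of x₁^p in f is positive; every multi-index α in the support of f satisfies q ∣ (w₁α₁ + ⋯ + wₙαₙ); and the support of f has cardinality M ≥ 2. Then for every integer N ≥ M² − 2M + 2 there exists a polynomial g ∈ ℝ[x₁,…,xₙ] with non-negative coefficients such that g(x) = 1 whenever x₁ + ⋯ + xₙ = 1, every multi-index α in the support of g satisfies q ∣ (w₁α₁ + ⋯ + wₙαₙ), and the support of g has exactly N elements. -/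

import Mathlib

open MvPolynomial

lemma supp_add_eq {n : ℕ} (a b : MvPolynomial (Fin n) ℝ)
    (h : Disjoint a.support b.support) : (a + b).support = a.support ∪ b.support := by
  ext α
  simp only [MvPolynomial.mem_support_iff, coeff_add, Finset.mem_union]
  constructor
  · intro h0
    by_contra hc
    push_neg at hc
    simp [hc.1, hc.2] at h0
  · intro h0
    rcases h0 with h1 | h1
    · have hb : b.coeff α = 0 := by
        by_contra hb
        exact (Finset.disjoint_left.1 h (MvPolynomial.mem_support_iff.2 h1))
          (MvPolynomial.mem_support_iff.2 hb)
      simpa [hb] using h1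
    · have ha : a.coeff α = 0 := by
        by_contra ha
        exact (Finset.disjoint_left.1 h (MvPolynomial.mem_support_iff.2 ha))
          (MvPolynomial.mem_support_iff.2 h1)
      simpa [ha] using h1

lemma step_aux {n q : ℕ} {w : Fin n → ℕ} {f : MvPolynomial (Fin n) ℝ} {M : ℕ}
    (hM : 2 ≤ M)
    (hfnn : ∀ α, 0 ≤ f.coeff α)
    (hf1 : ∀ x : Fin n → ℝ, (∑ i, x i) = 1 → eval x f = 1)
    (hf0 : f.coeff 0 = 0)
    (hfdiv : ∀ α ∈ f.support, q ∣ ∑ i, w i * α i)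
    (hfcard : f.support.card = M)
    (g : MvPolynomial (Fin n) ℝ)
    (hgnn : ∀ α, 0 ≤ g.coeff α)
    (hg1 : ∀ x : Fin n → ℝ, (∑ i, x i) = 1 → eval x g = 1)
    (hgdiv : ∀ α ∈ g.support, q ∣ ∑ i, w i * α i)
    (hgne : g ≠ 0) (keep : Bool) :
    ∃ g' : MvPolynomial (Fin n) ℝ,
      (∀ α, 0 ≤ g'.coeff α) ∧
      (∀ x : Fin n → ℝ, (∑ i, x i) = 1 → eval x g' = 1) ∧
      (∀ α ∈ g'.support, q ∣ ∑ i, w i * α i) ∧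
      g'.support.card = g.support.card + M - (if keep then 0 else 1) ∧ g' ≠ 0 := by
  have hsupp : g.support.Nonempty := by
    rwa [Finset.nonempty_iff_ne_empty, ne_eq, MvPolynomial.support_eq_empty]
  obtain ⟨β, hβmem, hβdeg⟩ := Finset.exists_mem_eq_sup g.support hsupp
    (fun s : Fin n →₀ ℕ => s.sum fun _ e => e)
  have hβdeg' : g.totalDegree = β.sum fun _ e => e := hβdeg
  set c := g.coeff β with hc
  have hc0 : 0 < c := lt_of_le_of_ne (hgnn β) (Ne.symm (MvPolynomial.mem_support_iff.1 hβmem))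
  set d : ℝ := if keep then c / 2 else c with hd
  have hd0 : 0 < d := by rcases keep with _ | _ <;> simp [hd] <;> linarith
  have hdc : d ≤ c := by rcases keep with _ | _ <;> simp [hd] <;> linarith
  set g' := (g - monomial β d) + monomial β d * f with hg'
  -- coefficient formula
  have hcoeff : ∀ α, g'.coeff α =
      (g.coeff α - if β = α then d else 0) +
        (if β ≤ α then d * f.coeff (α - β) else 0) := by
    intro α
    rw [hg', coeff_add, coeff_sub, coeff_monomial, coeff_monomial_mul']
  -- nonnegativity
  have hnn : ∀ α, 0 ≤ g'.coeff α := by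
    intro α
    rw [hcoeff]
    by_cases h : β = α
    · subst h
      rw [if_pos rfl, if_pos le_rfl, tsub_self, hf0, mul_zero, add_zero, ← hc]
      linarith
    · rw [if_neg h]
      have h1 : (0:ℝ) ≤ if β ≤ α then d * f.coeff (α - β) else 0 := by
        split
        · exact mul_nonneg hd0.le (hfnn _)
        · rfl
      have := hgnn α
      linarith
  -- evaluation
  have hev : ∀ x : Fin n → ℝ, (∑ i, x i) = 1 → eval x g' = 1 := by
    intro x hx
    rw [hg']
    simp only [map_add, map_sub, map_mul, hf1 x hx, hg1 x hx, mul_one]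
    ring
  -- support of the subtracted part
  have hs1 : (g - monomial β d).support =
      if keep then g.support else g.support.erase β := by
    ext α
    by_cases h : α = β
    · subst h
      have hcoe : (g - monomial α d).coeff α = c - d := by
        rw [coeff_sub, coeff_monomial, if_pos rfl, ← hc]
      rcases keep with _ | _
      · simp [MvPolynomial.mem_support_iff, hcoe, hd, hc]
      · simp only [if_true]
        rw [MvPolynomial.mem_support_iff, MvPolynomial.mem_support_iff, hcoe]
        have hdv : d = c / 2 := by simp [hd]
        have h2 : c - d ≠ 0 := by rw [hdv]; intro h3; linarith
        have h3 : g.coeff α ≠ 0 := MvPolynomial.mem_support_iff.1 hβmem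
        tauto
    · have hcoe : (g - monomial β d).coeff α = g.coeff α := by
        rw [coeff_sub, coeff_monomial, if_neg (fun he => h he.symm), sub_zero]
      rcases keep with _ | _ <;>
        simp [MvPolynomial.mem_support_iff, hcoe, h, Finset.mem_erase]
  -- support of the monomial-times-f part
  have hs2 : (monomial β d * f).support = f.support.image (fun γ => β + γ) := by
    ext α
    simp only [MvPolynomial.mem_support_iff, coeff_monomial_mul', Finset.mem_image]
    constructor
    · intro h0
      split at h0
      · next hle =>
        refine ⟨α - β, ?_, ?_⟩
        · intro hz
          rw [hz, mul_zero] at h0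
          exact h0 rfl
        · exact add_tsub_cancel_of_le hle
      · exact absurd rfl h0
    · rintro ⟨γ, hγ, rfl⟩
      rw [if_pos le_self_add, add_tsub_cancel_left]
      exact mul_ne_zero hd0.ne' hγ
  -- degrees of elements in the image are too big: disjointness
  have hdisj : Disjoint (if keep then g.support else g.support.erase β)
      ((monomial β d * f).support) := by
    rw [hs2, Finset.disjoint_left]
    intro α hα
    have hαg : α ∈ g.support := by
      rcases keep with _ | _
      · simp only [Bool.false_eq_true, if_false] at hα; exact Finset.mem_of_mem_erase hα
      · simpa using hα
    have hαdeg : (α.sum fun _ e => e) ≤ β.sum fun _ e => e := by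
      rw [← hβdeg']; exact MvPolynomial.le_totalDegree hαg
    rw [Finset.mem_image]
    rintro ⟨γ, hγ, rfl⟩
    have hγ0 : γ ≠ 0 := by
      rintro rfl
      exact MvPolynomial.mem_support_iff.1 hγ hf0
    have hγ1 : 1 ≤ γ.sum fun _ e => e := by
      obtain ⟨i, hi⟩ := Finsupp.ne_iff.1 hγ0
      simp only [Finsupp.coe_zero, Pi.zero_apply] at hi
      calc 1 ≤ γ i := Nat.one_le_iff_ne_zero.2 hi
        _ ≤ γ.sum fun _ e => e := by
          rw [Finsupp.sum]
          exact Finset.single_le_sum (fun _ _ => Nat.zero_le _)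
            (Finsupp.mem_support_iff.2 hi)
    have hadd : ((β + γ).sum fun _ e => e) = (β.sum fun _ e => e) + γ.sum fun _ e => e :=
      Finsupp.sum_add_index' (fun _ => rfl) (fun _ _ _ => rfl)
    omega
  -- assemble
  have hsupp' : g'.support = (if keep then g.support else g.support.erase β)
      ∪ (monomial β d * f).support := by
    rw [hg', ← hs1]
    exact supp_add_eq _ _ (hs1 ▸ hdisj)
  have hcard2 : (monomial β d * f).support.card = M := by
    rw [hs2, Finset.card_image_of_injective _ (add_right_injective β), hfcard]
  have hcard : g'.support.card = g.support.card + M - (if keep then 0 else 1) := by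
    rw [hsupp', Finset.card_union_of_disjoint hdisj, hcard2]
    rcases keep with _ | _
    · simp only [Bool.false_eq_true, if_false, Finset.card_erase_of_mem hβmem]
      have : 1 ≤ g.support.card := Finset.card_pos.2 hsupp
      omega
    · simp
  refine ⟨g', hnn, hev, ?_, hcard, ?_⟩
  · intro α hα
    rw [hsupp', Finset.mem_union] at hα
    rcases hα with hα | hα
    · have hαg : α ∈ g.support := by
        rcases keep with _ | _
        · simp only [Bool.false_eq_true, if_false] at hα; exact Finset.mem_of_mem_erase hα
        · simpa using hα
      exact hgdiv α hαg
    · rw [hs2, Finset.mem_image] at hα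
      obtain ⟨γ, hγ, rfl⟩ := hα
      have : (∑ i, w i * (β + γ) i) = (∑ i, w i * β i) + ∑ i, w i * γ i := by
        rw [← Finset.sum_add_distrib]
        congr 1
        ext i
        simp [Finsupp.add_apply, mul_add]
      rw [this]
      exact dvd_add (hgdiv β hβmem) (hfdiv γ hγ)
  · intro h0
    rw [h0] at hcard
    simp only [MvPolynomial.support_zero, Finset.card_empty] at hcard
    have : 1 ≤ g.support.card := Finset.card_pos.2 hsupp
    rcases keep with _ | _ <;> simp at hcard <;> omega

lemma repr_lemma (M N : ℕ) (hM : 2 ≤ M) (hN : M ^ 2 - 2 * M + 2 ≤ N) :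
    ∃ a b : ℕ, N = M + a * (M - 1) + b * M := by
  obtain ⟨t, rfl⟩ : ∃ t, M = t + 2 := ⟨M - 2, by omega⟩
  have hsq : (t + 2) ^ 2 = t * t + 4 * t + 4 := by ring
  rw [hsq] at hN
  set m := t + 1 with hm
  set K := N - (t + 2) with hK
  have hm0 : 0 < m := by omega
  have hdm : m * (K / m) + K % m = K := Nat.div_add_mod K m
  have hr : K % m < m := Nat.mod_lt _ hm0
  have hs : t ≤ K / m := by
    rw [Nat.le_div_iff_mul_le hm0]
    have : t * m = t * t + t := by ring
    omega
  obtain ⟨a, ha⟩ : ∃ a, K / m = K % m + a := ⟨K / m - K % m, by omega⟩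
  refine ⟨a, K % m, ?_⟩
  have h5 : m * (K % m + a) + K % m = a * m + (K % m) * (m + 1) := by ring
  rw [ha, h5] at hdm
  have h6 : (K % m) * (m + 1) = (K % m) * (t + 2) := by rw [hm]
  have h7 : a * m = a * (t + 2 - 1) := by norm_num [hm]
  omega

/-- General gap-termination theorem (Theorem 1 of the paper): given an invariant
polynomial `f` of rank `M ≥ 2` with the stated properties, every `N ≥ M² - 2M + 2`
is realized as the rank of an invariant polynomial with non-negative coefficients
that equals `1` on the hyperplane `∑ xᵢ = 1`. -/
theorem stmt_3 (n q : ℕ) (hn : 1 ≤ n) (hq : 1 ≤ q) (w : Fin n → ℕ)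
    (f : MvPolynomial (Fin n) ℝ) (p M : ℕ) (hp : 1 ≤ p) (hM : 2 ≤ M)
    (hfnn : ∀ α, 0 ≤ f.coeff α)
    (hf1 : ∀ x : Fin n → ℝ, (∑ i, x i) = 1 → eval x f = 1)
    (hf0 : f.coeff 0 = 0)
    (hfdeg : f.totalDegree = p)
    (hfpure : 0 < f.coeff (Finsupp.single ⟨0, hn⟩ p))
    (hfdiv : ∀ α ∈ f.support, q ∣ ∑ i, w i * α i)
    (hfcard : f.support.card = M)
    (N : ℕ) (hN : M ^ 2 - 2 * M + 2 ≤ N) :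
    ∃ g : MvPolynomial (Fin n) ℝ,
      (∀ α, 0 ≤ g.coeff α) ∧
      (∀ x : Fin n → ℝ, (∑ i, x i) = 1 → eval x g = 1) ∧
      (∀ α ∈ g.support, q ∣ ∑ i, w i * α i) ∧
      g.support.card = N := by
  have hfne : f ≠ 0 := by
    intro h0
    rw [h0, MvPolynomial.support_zero, Finset.card_empty] at hfcard
    omega
  have iter : ∀ a b : ℕ, ∃ g : MvPolynomial (Fin n) ℝ,
      (∀ α, 0 ≤ g.coeff α) ∧
      (∀ x : Fin n → ℝ, (∑ i, x i) = 1 → eval x g = 1) ∧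
      (∀ α ∈ g.support, q ∣ ∑ i, w i * α i) ∧
      g.support.card = M + a * (M - 1) + b * M ∧ g ≠ 0 := by
    intro a
    induction a with
    | zero =>
      intro b
      induction b with
      | zero => exact ⟨f, hfnn, hf1, hfdiv, by simpa using hfcard, hfne⟩
      | succ b ihb =>
        obtain ⟨g, hgnn, hg1, hgdiv, hgcard, hgne⟩ := ihb
        obtain ⟨g', h1, h2, h3, h4, h5⟩ := step_aux hM hfnn hf1 hf0 hfdiv hfcard g
          hgnn hg1 hgdiv hgne true
        refine ⟨g', h1, h2, h3, ?_, h5⟩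
        norm_num at h4
        have hx : (b + 1) * M = b * M + M := Nat.succ_mul _ _
        omega
    | succ a iha =>
      intro b
      obtain ⟨g, hgnn, hg1, hgdiv, hgcard, hgne⟩ := iha b
      obtain ⟨g', h1, h2, h3, h4, h5⟩ := step_aux hM hfnn hf1 hf0 hfdiv hfcard g
        hgnn hg1 hgdiv hgne false
      refine ⟨g', h1, h2, h3, ?_, h5⟩
      norm_num at h4
      have hx : (a + 1) * (M - 1) = a * (M - 1) + (M - 1) := Nat.succ_mul _ _
      have h6 : 1 ≤ g.support.card := by
        refine Finset.card_pos.2 ?_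
        rwa [Finset.nonempty_iff_ne_empty, ne_eq, MvPolynomial.support_eq_empty]
      omega
  obtain ⟨a, b, hab⟩ := repr_lemma M N hM hN
  obtain ⟨g, h1, h2, h3, h4, _⟩ := iter a b
  exact ⟨g, h1, h2, h3, by rw [h4, hab]⟩
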